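/- (Lemma 1, second part, beam splitter case.) Let a parallel gate configuration have path i entering a beam splitter, i.e., i ∈ {s,t} ∈ B (so in particular i ∉ D), let z ∈ ℂ^N, write w = Wz, and assume |w_s|² + |w_t|² ≠ 0. Then for every p ∈ [z]_i there exist p_s ∈ [w]_s and p_t ∈ [w]_t such that the output measure satisfies pK = (|w_s|²/(|w_s|²+|w_t|²))·p_s + (|w_t|²/(|w_s|²+|w_t|²))·p_t. -/

import Mathlib

open MeasureTheory
open scoped Classical

namespace SPI

/-! ## Ontology -/

/-- Ontic states: particle position `q`, field amplitudes `u`, field strengths `τ`. -/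
abbrev Lam (N : ℕ) := Fin N × (Fin N → ℂ) × (Fin N → ℝ)

/-- The constraint region of `Λ`: `|u j| ≤ 1` and `τ j ∈ [0,1]`. -/
def onticSet (N : ℕ) : Set (Lam N) :=
  {l | (∀ j, ‖l.2.1 j‖ ≤ 1) ∧ ∀ j, l.2.2 j ∈ Set.Icc (0 : ℝ) 1}

/-- Highest field strength `τ_max`. -/
noncomputable def tmax {N : ℕ} (τ : Fin N → ℝ) : ℝ := ⨆ j, τ j

/-- `Δ_τ u` : the amplitude vector with only maximal-strength entries retained. -/
noncomputable def deltaVec {N : ℕ} (τ : Fin N → ℝ) (u : Fin N → ℂ) : Fin N → ℂ :=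
  fun j => if τ j = tmax τ then u j else 0

/-- Proportionality `z ∼ z'` of complex vectors (a nonzero multiple). -/
def Propto {N : ℕ} (v w : Fin N → ℂ) : Prop := ∃ α : ℂ, α ≠ 0 ∧ v = α • w

/-- The subset `Λ_z^i` of the ontic state space. -/
def lamSet {N : ℕ} (z : Fin N → ℂ) (i : Fin N) : Set (Lam N) :=
  {l | l.1 = i ∧ l.2.2 i = tmax l.2.2 ∧ 0 < tmax l.2.2 ∧ Propto (deltaVec l.2.2 l.2.1) z}

/-- Membership in the auxiliary class `[z]_i`: a (Borel) probability measure giving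
full measure to `Λ_z^i`. -/
def memClassI {N : ℕ} (z : Fin N → ℂ) (i : Fin N) (μ : Measure (Lam N)) : Prop :=
  IsProbabilityMeasure μ ∧ μ (lamSet z i) = 1

/-- Membership in the class `[z]` (for a unit vector `z`): mixtures `∑ |z i|² • pᵢ`
with `pᵢ ∈ [z]_i` (terms with `z i = 0` omitted). -/
def memClass {N : ℕ} (z : Fin N → ℂ) (μ : Measure (Lam N)) : Prop :=
  ∃ f : Fin N → Measure (Lam N),
    (∀ i, z i ≠ 0 → memClassI z i (f i)) ∧
    μ = ∑ i, ENNReal.ofReal (‖z i‖ ^ 2) • f i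

/-- The `j`-th standard basis vector of `ℂ^N`. -/
def eVec {N : ℕ} (j : Fin N) : Fin N → ℂ := fun m => if m = j then 1 else 0

/-! ## Parallel gate configurations -/

/-- A parallel gate configuration: a partition of the paths `{1,…,N}` into free paths `Fr`,
detector paths `De`, phase-shifter paths `Sh` (phases `ω`), and a collection `Bs` of pairwise
disjoint pairs (beam splitters with constants `R`, `T`, `R + T = 1`). -/
structure Config (N : ℕ) where
  Fr : Finset (Fin N)
  De : Finset (Fin N)
  Sh : Finset (Fin N)
  ω : Fin N → ℝ
  Bs : Finset (Fin N × Fin N)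
  R : Fin N × Fin N → ℝ
  T : Fin N × Fin N → ℝ
  hR : ∀ p ∈ Bs, 0 ≤ R p
  hT : ∀ p ∈ Bs, 0 ≤ T p
  hRT : ∀ p ∈ Bs, R p + T p = 1
  hst : ∀ p ∈ Bs, p.1 ≠ p.2
  hBB : ∀ p ∈ Bs, ∀ q ∈ Bs, p ≠ q → p.1 ≠ q.1 ∧ p.1 ≠ q.2 ∧ p.2 ≠ q.1 ∧ p.2 ≠ q.2
  hFD : Disjoint Fr De
  hFS : Disjoint Fr Sh
  hDS : Disjoint De Sh
  hBdisj : ∀ p ∈ Bs, p.1 ∉ Fr ∧ p.2 ∉ Fr ∧ p.1 ∉ De ∧ p.2 ∉ De ∧ p.1 ∉ Sh ∧ p.2 ∉ Sh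
  hcover : ∀ m : Fin N, m ∈ Fr ∨ m ∈ De ∨ m ∈ Sh ∨ ∃ p ∈ Bs, m = p.1 ∨ m = p.2

/-- Path `m` enters some beam splitter of the configuration. -/
def inB {N : ℕ} (c : Config N) (m : Fin N) : Prop := ∃ p ∈ c.Bs, m = p.1 ∨ m = p.2

/-- The new field strengths `τ'` produced by the parallel gates. -/
noncomputable def newTau {N : ℕ} (c : Config N) (q : Fin N) (τ : Fin N → ℝ) : Fin N → ℝ :=
  fun m =>
    if m ∈ c.De then (if q = m then 1 else 0)
    else if hm : inB c m then max (τ hm.choose.1) (τ hm.choose.2) / 2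
    else τ m / 2

/-- The new field amplitudes `u'` produced by the parallel gates. -/
noncomputable def newAmp {N : ℕ} (c : Config N) (q : Fin N) (u : Fin N → ℂ) (τ : Fin N → ℝ) :
    Fin N → ℂ :=
  fun m =>
    if m ∈ c.De then (if q = m then 1 else u m)
    else if m ∈ c.Sh then Complex.exp (Complex.I * (c.ω m : ℂ)) * u m
    else if hm : inB c m then
      (let p := hm.choose
       let ts := max (τ p.1) (τ p.2)
       let us : ℂ := if τ p.1 = ts then u p.1 else 0
       let ut : ℂ := if τ p.2 = ts then u p.2 else 0
       if m = p.1 then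
         Complex.I * (Real.sqrt (c.R p) : ℂ) * us + (Real.sqrt (c.T p) : ℂ) * ut
       else
         (Real.sqrt (c.T p) : ℂ) * us + Complex.I * (Real.sqrt (c.R p) : ℂ) * ut)
    else u m

/-- One step of the dynamics: the Markov kernel `K` of the parallel gate configuration,
as a measure-valued map on ontic states. -/
noncomputable def step {N : ℕ} (c : Config N) (l : Lam N) : Measure (Lam N) :=
  let q := l.1
  let u' := newAmp c q l.2.1 l.2.2
  let τ' := newTau c q l.2.2
  if hq : inB c q then
    (let p := hq.choose
     let a := ‖u' p.1‖ ^ 2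
     let b := ‖u' p.2‖ ^ 2
     if a + b = 0 then Measure.dirac (q, u', τ')
     else ENNReal.ofReal (a / (a + b)) • Measure.dirac (p.1, u', τ')
        + ENNReal.ofReal (b / (a + b)) • Measure.dirac (p.2, u', τ'))
  else Measure.dirac (q, u', τ')

/-- The output measure `pK` of the kernel applied to an input measure `p`. -/
noncomputable def out {N : ℕ} (c : Config N) (μ : Measure (Lam N)) : Measure (Lam N) :=
  μ.bind (step c)

/-! ## Interferometric matrices -/

/-- The projector `P_j` onto component `j`. -/
def Pmat {N : ℕ} (j : Fin N) : Matrix (Fin N) (Fin N) ℂ :=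
  Matrix.diagonal (fun a => if a = j then 1 else 0)

/-- The phase-shifter matrix `S_k(ω)`. -/
noncomputable def Smat {N : ℕ} (k : Fin N) (ω : ℝ) : Matrix (Fin N) (Fin N) ℂ :=
  Matrix.diagonal (fun a => if a = k then Complex.exp (Complex.I * (ω : ℂ)) else 1)

/-- The beam-splitter matrix `B_st(R,T)`: identity outside `{s,t}` and
`[[i√R, √T],[√T, i√R]]` on components `{s,t}`. -/
noncomputable def Bmat {N : ℕ} (s t : Fin N) (R T : ℝ) : Matrix (Fin N) (Fin N) ℂ :=
  Matrix.of fun a b =>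
    if a = s then
      (if b = s then Complex.I * (Real.sqrt R : ℂ) else if b = t then (Real.sqrt T : ℂ) else 0)
    else if a = t then
      (if b = s then (Real.sqrt T : ℂ) else if b = t then Complex.I * (Real.sqrt R : ℂ) else 0)
    else if a = b then 1 else 0

/-- The matrix `Δ_τ` selecting the components of maximal strength. -/
noncomputable def Dmat {N : ℕ} (τ : Fin N → ℝ) : Matrix (Fin N) (Fin N) ℂ :=
  Matrix.diagonal (fun j => if τ j = tmax τ then 1 else 0)

/-- The matrix `Δ^(st)_τ` with `δ_{τ_s,max(τ_s,τ_t)}`, `δ_{τ_t,max(τ_s,τ_t)}` at `s`, `t`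
and `1` elsewhere on the diagonal. -/
noncomputable def DmatST {N : ℕ} (τ : Fin N → ℝ) (s t : Fin N) : Matrix (Fin N) (Fin N) ℂ :=
  Matrix.diagonal (fun m =>
    if m = s then (if τ s = max (τ s) (τ t) then 1 else 0)
    else if m = t then (if τ t = max (τ s) (τ t) then 1 else 0)
    else 1)

/-! ## Commutation lemmas -/

lemma commute_diagonal {N : ℕ} (d e : Fin N → ℂ) :
    Commute (Matrix.diagonal d) (Matrix.diagonal e) := by
  have h : (fun i => d i * e i) = fun i => e i * d i := funext fun i => mul_comm _ _
  show Matrix.diagonal d * Matrix.diagonal e = Matrix.diagonal e * Matrix.diagonal d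
  rw [Matrix.diagonal_mul_diagonal, Matrix.diagonal_mul_diagonal, h]

lemma oneSubP_diagonal {N : ℕ} (j : Fin N) :
    (1 : Matrix (Fin N) (Fin N) ℂ) - Pmat j
      = Matrix.diagonal (fun a => 1 - if a = j then 1 else 0) := by
  rw [Pmat, ← Matrix.diagonal_one, Matrix.diagonal_sub]

lemma commute_oneSubP {N : ℕ} (j j' : Fin N) :
    Commute ((1 : Matrix (Fin N) (Fin N) ℂ) - Pmat j) (1 - Pmat j') := by
  rw [oneSubP_diagonal, oneSubP_diagonal]; exact commute_diagonal _ _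

/-- A matrix which differs from the identity only inside the block `{s,t} × {s,t}`. -/
def IsBlock {N : ℕ} (s t : Fin N) (M : Matrix (Fin N) (Fin N) ℂ) : Prop :=
  ∀ a b, ¬((a = s ∨ a = t) ∧ (b = s ∨ b = t)) →
    M a b = (1 : Matrix (Fin N) (Fin N) ℂ) a b

lemma commute_of_isBlock {N : ℕ} {s t s' t' : Fin N} {M M' : Matrix (Fin N) (Fin N) ℂ}
    (hM : IsBlock s t M) (hM' : IsBlock s' t' M')
    (h1 : s ≠ s') (h2 : s ≠ t') (h3 : t ≠ s') (h4 : t ≠ t') : Commute M M' := by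
  have hrow : ∀ a b : Fin N, a ≠ s → a ≠ t → (M - 1) a b = 0 := by
    intro a b ha hb
    have h := hM a b (by tauto)
    simp [Matrix.sub_apply, h]
  have hcol : ∀ a b : Fin N, b ≠ s → b ≠ t → (M - 1) a b = 0 := by
    intro a b hb1 hb2
    have h := hM a b (by tauto)
    simp [Matrix.sub_apply, h]
  have hrow' : ∀ a b : Fin N, a ≠ s' → a ≠ t' → (M' - 1) a b = 0 := by
    intro a b ha hb
    have h := hM' a b (by tauto)
    simp [Matrix.sub_apply, h]
  have hcol' : ∀ a b : Fin N, b ≠ s' → b ≠ t' → (M' - 1) a b = 0 := by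
    intro a b hb1 hb2
    have h := hM' a b (by tauto)
    simp [Matrix.sub_apply, h]
  have hEE' : (M - 1) * (M' - 1) = 0 := by
    ext a b
    rw [Matrix.mul_apply, Matrix.zero_apply]
    apply Finset.sum_eq_zero
    intro k _
    by_cases hk : k = s ∨ k = t
    · have : (M' - 1) k b = 0 := by
        rcases hk with h | h
        · subst h; exact hrow' _ _ h1 h2
        · subst h; exact hrow' _ _ h3 h4
      rw [this, mul_zero]
    · push_neg at hk
      rw [hcol a k hk.1 hk.2, zero_mul]
  have hE'E : (M' - 1) * (M - 1) = 0 := by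
    ext a b
    rw [Matrix.mul_apply, Matrix.zero_apply]
    apply Finset.sum_eq_zero
    intro k _
    by_cases hk : k = s' ∨ k = t'
    · have : (M - 1) k b = 0 := by
        rcases hk with h | h
        · subst h; exact hrow _ _ (Ne.symm h1) (Ne.symm h3)
        · subst h; exact hrow _ _ (Ne.symm h2) (Ne.symm h4)
      rw [this, mul_zero]
    · push_neg at hk
      rw [hcol' a k hk.1 hk.2, zero_mul]
  have expand : ∀ A B : Matrix (Fin N) (Fin N) ℂ,
      A * B = (A - 1) * (B - 1) + A + B - 1 := by
    intro A B; noncomm_ring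
  unfold Commute SemiconjBy
  rw [expand M M', expand M' M, hEE', hE'E]
  abel

lemma isBlock_Bmat {N : ℕ} (s t : Fin N) (R T : ℝ) : IsBlock s t (Bmat s t R T) := by
  intro a b hab
  by_cases has : a = s ∨ a = t
  · have hbs : ¬(b = s ∨ b = t) := fun h => hab ⟨has, h⟩
    push_neg at hbs
    have hb : a ≠ b := by
      rcases has with h | h <;> subst h
      · exact fun hc => hbs.1 hc.symm
      · exact fun hc => hbs.2 hc.symm
    rw [Matrix.one_apply_ne hb]
    rcases has with h | h <;> subst h <;> simp [Bmat, hbs.1, hbs.2]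
  · push_neg at has
    simp [Bmat, Matrix.one_apply, has.1, has.2]

lemma isBlock_one_sub_Pmat {N : ℕ} (j : Fin N) :
    IsBlock j j ((1 : Matrix (Fin N) (Fin N) ℂ) - Pmat j) := by
  intro a b hab
  have haj : a ≠ j ∨ b ≠ j := by tauto
  rw [oneSubP_diagonal]
  by_cases h : a = b
  · subst h
    have haj' : a ≠ j := by tauto
    simp [Matrix.diagonal_apply_eq, Matrix.one_apply_eq, haj']
  · simp [Matrix.diagonal_apply_ne _ h, Matrix.one_apply_ne h]

lemma isBlock_Smat {N : ℕ} (k : Fin N) (ω : ℝ) : IsBlock k k (Smat k ω) := by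
  intro a b hab
  have haj : a ≠ k ∨ b ≠ k := by tauto
  by_cases h : a = b
  · subst h
    have haj' : a ≠ k := by tauto
    simp [Smat, Matrix.diagonal_apply_eq, Matrix.one_apply_eq, haj']
  · simp [Smat, Matrix.diagonal_apply_ne _ h, Matrix.one_apply_ne h]

lemma isBlock_mul_diag {N : ℕ} (s t : Fin N) (M : Matrix (Fin N) (Fin N) ℂ)
    (hM : IsBlock s t M) (d : Fin N → ℂ) (hd : ∀ m, m ≠ s → m ≠ t → d m = 1) :
    IsBlock s t (M * Matrix.diagonal d) := by
  intro a b hab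
  rw [Matrix.mul_diagonal, hM a b hab]
  by_cases h : a = b
  · subst h
    have h1 : a ≠ s := fun hc => hab ⟨Or.inl hc, Or.inl hc⟩
    have h2 : a ≠ t := fun hc => hab ⟨Or.inr hc, Or.inr hc⟩
    rw [Matrix.one_apply_eq, hd a h1 h2, mul_one]
  · rw [Matrix.one_apply_ne h, zero_mul]

lemma isBlock_BmatD {N : ℕ} (s t : Fin N) (R T : ℝ) (τ : Fin N → ℝ) :
    IsBlock s t (Bmat s t R T * DmatST τ s t) := by
  unfold DmatST
  refine isBlock_mul_diag s t _ (isBlock_Bmat s t R T) _ ?_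
  intro m h1 h2
  simp [h1, h2]

/-! ## The matrix `W` of the configuration -/

noncomputable def Dprod {N : ℕ} (c : Config N) : Matrix (Fin N) (Fin N) ℂ :=
  c.De.noncommProd (fun j => 1 - Pmat j) (fun _ _ _ _ _ => commute_oneSubP _ _)

noncomputable def Sprod {N : ℕ} (c : Config N) : Matrix (Fin N) (Fin N) ℂ :=
  c.Sh.noncommProd (fun k => Smat k (c.ω k)) (fun _ _ _ _ _ => commute_diagonal _ _)

noncomputable def Bprod {N : ℕ} (c : Config N) : Matrix (Fin N) (Fin N) ℂ :=
  c.Bs.noncommProd (fun p => Bmat p.1 p.2 (c.R p) (c.T p))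
    (fun p hp q hq hpq => by
      obtain ⟨h1, h2, h3, h4⟩ := c.hBB p hp q hq hpq
      exact commute_of_isBlock (isBlock_Bmat _ _ _ _) (isBlock_Bmat _ _ _ _) h1 h2 h3 h4)

/-- The matrix `W = ∏_{j∈D}(1−P_j) ∏_{k∈S} S_k(ω_k) ∏_{{s,t}∈B} B_st(R_st,T_st)`. -/
noncomputable def Wmat {N : ℕ} (c : Config N) : Matrix (Fin N) (Fin N) ℂ :=
  Dprod c * Sprod c * Bprod c

/-- The vector `W z`. -/
noncomputable def Wvec {N : ℕ} (c : Config N) (z : Fin N → ℂ) : Fin N → ℂ :=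
  (Wmat c).mulVec z

/-- The product `∏_{{s,t}∈B} (B_st(R_st,T_st) Δ^(st)_τ)`. -/
noncomputable def BDprod {N : ℕ} (c : Config N) (τ : Fin N → ℝ) : Matrix (Fin N) (Fin N) ℂ :=
  c.Bs.noncommProd (fun p => Bmat p.1 p.2 (c.R p) (c.T p) * DmatST τ p.1 p.2)
    (fun p hp q hq hpq => by
      obtain ⟨h1, h2, h3, h4⟩ := c.hBB p hp q hq hpq
      exact commute_of_isBlock (isBlock_BmatD _ _ _ _ _) (isBlock_BmatD _ _ _ _ _) h1 h2 h3 h4)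

/-! ## Auxiliary lemmas -/

section Aux

variable {N : ℕ}

/-- Two beam-splitter pairs sharing a path are equal. -/
lemma pair_unique (c : Config N) {p q : Fin N × Fin N} (hp : p ∈ c.Bs) (hq : q ∈ c.Bs)
    {m : Fin N} (hmp : m = p.1 ∨ m = p.2) (hmq : m = q.1 ∨ m = q.2) : p = q := by
  by_contra hne
  obtain ⟨h1, h2, h3, h4⟩ := c.hBB p hp q hq hne
  rcases hmp with rfl | rfl <;> rcases hmq with h | h <;> simp_all

lemma choose_eq (c : Config N) {m : Fin N} (hm : inB c m) {p : Fin N × Fin N}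
    (hp : p ∈ c.Bs) (hmp : m = p.1 ∨ m = p.2) : hm.choose = p :=
  pair_unique c hm.choose_spec.1 hp hm.choose_spec.2 hmp

lemma not_inB (c : Config N) {m : Fin N} (h : m ∈ c.Fr ∨ m ∈ c.De ∨ m ∈ c.Sh) :
    ¬ inB c m := by
  rintro ⟨p, hp, rfl | rfl⟩ <;>
    obtain ⟨a1, a2, a3, a4, a5, a6⟩ := c.hBdisj p hp <;> tauto

lemma inB_not_mem (c : Config N) {m : Fin N} (h : inB c m) :
    m ∉ c.Fr ∧ m ∉ c.De ∧ m ∉ c.Sh := by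
  obtain ⟨p, hp, hm⟩ := h
  obtain ⟨a1, a2, a3, a4, a5, a6⟩ := c.hBdisj p hp
  rcases hm with rfl | rfl <;> exact ⟨by assumption, by assumption, by assumption⟩

/-- Characterization of attaining the max strength. -/
lemma tmax_eq_iff [Nonempty (Fin N)] (τ : Fin N → ℝ) (m : Fin N) :
    τ m = tmax τ ↔ ∀ j, τ j ≤ τ m := by
  constructor
  · intro h j
    rw [h]
    exact le_ciSup (Set.finite_range τ).bddAbove j
  · intro h
    exact le_antisymm (le_ciSup (Set.finite_range τ).bddAbove m) (ciSup_le h)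

lemma le_tmax [Nonempty (Fin N)] (τ : Fin N → ℝ) (j : Fin N) : τ j ≤ tmax τ :=
  le_ciSup (Set.finite_range τ).bddAbove j

lemma tmax_eq_of [Nonempty (Fin N)] {τ : Fin N → ℝ} {M : ℝ} (h : ∀ j, τ j ≤ M)
    {m : Fin N} (hm : τ m = M) : tmax τ = M :=
  le_antisymm (ciSup_le h) (hm ▸ le_ciSup (Set.finite_range τ).bddAbove m)

/-- Characterization of `Propto v z` for `z ≠ 0` via a coordinate `j0` where `z j0 ≠ 0`. -/
lemma propto_iff {v z : Fin N → ℂ} {j0 : Fin N} (hj0 : z j0 ≠ 0) :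
    Propto v z ↔ v j0 ≠ 0 ∧ v = (v j0 / z j0) • z := by
  constructor
  · rintro ⟨α, hα, rfl⟩
    have hv : α * z j0 ≠ 0 := mul_ne_zero hα hj0
    refine ⟨by simpa using hv, ?_⟩
    have : (α • z) j0 / z j0 = α := by
      simp only [Pi.smul_apply, smul_eq_mul]
      field_simp
    rw [this]
  · rintro ⟨h1, h2⟩
    exact ⟨v j0 / z j0, div_ne_zero h1 hj0, h2⟩

lemma propto_zero (v : Fin N → ℂ) : Propto v 0 ↔ v = 0 := by
  constructor
  · rintro ⟨α, hα, rfl⟩; simp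
  · rintro rfl; exact ⟨1, one_ne_zero, by simp⟩

/-! ### Diagonal product lemmas -/

lemma Dprod_aux (F : Finset (Fin N)) :
    F.noncommProd (fun j => (1 : Matrix (Fin N) (Fin N) ℂ) - Pmat j)
        (fun _ _ _ _ _ => commute_oneSubP _ _)
      = Matrix.diagonal (fun m => if m ∈ F then 0 else 1) := by
  induction F using Finset.induction_on with
  | empty => simp [Finset.noncommProd_empty, Matrix.diagonal_one]; exact Finset.noncommProd_empty _ _
  | @insert a F ha ih =>
    refine (Finset.noncommProd_insert_of_notMem _ _ _ _ ha).trans ?_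
    rw [ih, oneSubP_diagonal,
      Matrix.diagonal_mul_diagonal]
    apply congrArg Matrix.diagonal
    funext m
    by_cases hma : m = a
    · subst hma; simp
    · by_cases hmF : m ∈ F <;> simp [hma, hmF]

lemma Dprod_eq (c : Config N) :
    Dprod c = Matrix.diagonal (fun m => if m ∈ c.De then 0 else 1) :=
  Dprod_aux c.De

lemma Sprod_aux (ω : Fin N → ℝ) (F : Finset (Fin N)) :
    F.noncommProd (fun k => Smat k (ω k)) (fun _ _ _ _ _ => commute_diagonal _ _)
      = Matrix.diagonal
          (fun m => if m ∈ F then Complex.exp (Complex.I * (ω m : ℂ)) else 1) := by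
  induction F using Finset.induction_on with
  | empty => simp [Finset.noncommProd_empty, Matrix.diagonal_one]; exact Finset.noncommProd_empty _ _
  | @insert a F ha ih =>
    refine (Finset.noncommProd_insert_of_notMem _ _ _ _ ha).trans ?_
    rw [ih]
    unfold Smat
    rw [Matrix.diagonal_mul_diagonal]
    apply congrArg Matrix.diagonal
    funext m
    by_cases hma : m = a
    · subst hma; simp [ha]
    · by_cases hmF : m ∈ F <;> simp [hma, hmF]

lemma Sprod_eq (c : Config N) :
    Sprod c = Matrix.diagonal
      (fun m => if m ∈ c.Sh then Complex.exp (Complex.I * (c.ω m : ℂ)) else 1) :=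
  Sprod_aux c.ω c.Sh

/-! ### Row lemmas -/

/-- `M` has the same row `m` as the identity matrix. -/
def RowId (m : Fin N) (M : Matrix (Fin N) (Fin N) ℂ) : Prop :=
  ∀ b, M m b = (1 : Matrix (Fin N) (Fin N) ℂ) m b

lemma RowId.mul {m : Fin N} {M M' : Matrix (Fin N) (Fin N) ℂ}
    (h : RowId m M) (h' : RowId m M') : RowId m (M * M') := by
  intro b
  rw [Matrix.mul_apply]
  have : ∀ k, M m k * M' k b = if k = m then M' m b else 0 := by
    intro k
    rcases eq_or_ne k m with rfl | hk
    · simp [h k, Matrix.one_apply]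
    · rw [h k, Matrix.one_apply_ne (Ne.symm hk), zero_mul, if_neg hk]
  simp only [this]
  rw [Finset.sum_ite_eq' _ m, if_pos (Finset.mem_univ m)]
  exact h' b

lemma RowId.one (m : Fin N) : RowId m (1 : Matrix (Fin N) (Fin N) ℂ) := fun _ => rfl

lemma RowId.mulVec {m : Fin N} {M : Matrix (Fin N) (Fin N) ℂ} (h : RowId m M)
    (v : Fin N → ℂ) : M.mulVec v m = v m := by
  unfold Matrix.mulVec dotProduct
  have : ∀ k, M m k * v k = if k = m then v m else 0 := by
    intro k
    rcases eq_or_ne k m with rfl | hk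
    · simp [h k, Matrix.one_apply]
    · rw [h k, Matrix.one_apply_ne (Ne.symm hk), zero_mul, if_neg hk]
  simp only [this]
  rw [Finset.sum_ite_eq' _ m, if_pos (Finset.mem_univ m)]

lemma rowId_of_isBlock {m s t : Fin N} {M : Matrix (Fin N) (Fin N) ℂ}
    (hM : IsBlock s t M) (h1 : m ≠ s) (h2 : m ≠ t) : RowId m M := fun b =>
  hM m b (by tauto)

lemma Bprod_rowId (c : Config N) {m : Fin N} (hm : ¬ inB c m) : RowId m (Bprod c) := by
  unfold Bprod
  apply Finset.noncommProd_induction _ _ _ (RowId m) (fun _ _ => RowId.mul) (RowId.one m)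
  intro p hp
  have h1 : m ≠ p.1 := fun h => hm ⟨p, hp, Or.inl h⟩
  have h2 : m ≠ p.2 := fun h => hm ⟨p, hp, Or.inr h⟩
  exact rowId_of_isBlock (isBlock_Bmat _ _ _ _) h1 h2

lemma Bmat_mulVec_fst {s t : Fin N} (hst : s ≠ t) (R T : ℝ) (v : Fin N → ℂ) :
    (Bmat s t R T).mulVec v s
      = Complex.I * (Real.sqrt R : ℂ) * v s + (Real.sqrt T : ℂ) * v t := by
  unfold Matrix.mulVec dotProduct
  have : ∀ b, Bmat s t R T s b * v b
      = (if b = s then Complex.I * (Real.sqrt R : ℂ) * v s else 0)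
        + (if b = t then (Real.sqrt T : ℂ) * v t else 0) := by
    intro b
    rcases eq_or_ne b s with rfl | hbs
    · simp [Bmat, hst, Ne.symm hst]
    · rcases eq_or_ne b t with rfl | hbt
      · simp [Bmat, hbs]
      · simp [Bmat, hbs, hbt]
  simp only [this]
  rw [Finset.sum_add_distrib, Finset.sum_ite_eq' _ s, Finset.sum_ite_eq' _ t]
  simp

lemma Bmat_mulVec_snd {s t : Fin N} (hst : s ≠ t) (R T : ℝ) (v : Fin N → ℂ) :
    (Bmat s t R T).mulVec v t
      = (Real.sqrt T : ℂ) * v s + Complex.I * (Real.sqrt R : ℂ) * v t := by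
  unfold Matrix.mulVec dotProduct
  have : ∀ b, Bmat s t R T t b * v b
      = (if b = s then (Real.sqrt T : ℂ) * v s else 0)
        + (if b = t then Complex.I * (Real.sqrt R : ℂ) * v t else 0) := by
    intro b
    rcases eq_or_ne b s with rfl | hbs
    · simp [Bmat, hst, Ne.symm hst]
    · rcases eq_or_ne b t with rfl | hbt
      · simp [Bmat, Ne.symm hst, hbs]
      · simp [Bmat, Ne.symm hst, hbs, hbt]
  simp only [this]
  rw [Finset.sum_add_distrib, Finset.sum_ite_eq' _ s, Finset.sum_ite_eq' _ t]
  simp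

/-- Splitting off one beam splitter from the product. -/
lemma Bprod_split (c : Config N) {p : Fin N × Fin N} (hp : p ∈ c.Bs) :
    ∃ Rest : Matrix (Fin N) (Fin N) ℂ,
      Bprod c = Bmat p.1 p.2 (c.R p) (c.T p) * Rest ∧ RowId p.1 Rest ∧ RowId p.2 Rest := by
  refine ⟨_, (Finset.mul_noncommProd_erase c.Bs hp _ _).symm, ?_, ?_⟩
  all_goals
    apply Finset.noncommProd_induction _ _ _ (RowId _) (fun _ _ => RowId.mul) (RowId.one _)
    intro q hq
    have hqB := Finset.mem_of_mem_erase hq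
    have hpq : p ≠ q := fun h => (Finset.notMem_erase p c.Bs) (h ▸ hq)
    obtain ⟨h1, h2, h3, h4⟩ := c.hBB p hp q hqB hpq
  · exact rowId_of_isBlock (isBlock_Bmat _ _ _ _) h1 h2
  · exact rowId_of_isBlock (isBlock_Bmat _ _ _ _) h3 h4

/-! ### Coordinates of `Wvec` -/

lemma Wvec_eq (c : Config N) (z : Fin N → ℂ) (m : Fin N) :
    Wvec c z m = (if m ∈ c.De then 0 else 1) *
      ((if m ∈ c.Sh then Complex.exp (Complex.I * (c.ω m : ℂ)) else 1) *
        ((Bprod c).mulVec z m)) := by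
  show (Wmat c).mulVec z m = _
  rw [Wmat, ← Matrix.mulVec_mulVec, ← Matrix.mulVec_mulVec, Dprod_eq, Sprod_eq,
    Matrix.mulVec_diagonal, Matrix.mulVec_diagonal]

lemma Wvec_de (c : Config N) (z : Fin N → ℂ) {m : Fin N} (hm : m ∈ c.De) :
    Wvec c z m = 0 := by
  rw [Wvec_eq]; simp [hm]

lemma Wvec_free (c : Config N) (z : Fin N → ℂ) {m : Fin N} (hmD : m ∉ c.De)
    (hmB : ¬ inB c m) :
    Wvec c z m
      = (if m ∈ c.Sh then Complex.exp (Complex.I * (c.ω m : ℂ)) else 1) * z m := by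
  rw [Wvec_eq, (Bprod_rowId c hmB).mulVec z]
  simp [hmD]

lemma Wvec_pair (c : Config N) (z : Fin N → ℂ) {p : Fin N × Fin N} (hp : p ∈ c.Bs) :
    Wvec c z p.1 = Complex.I * (Real.sqrt (c.R p) : ℂ) * z p.1
        + (Real.sqrt (c.T p) : ℂ) * z p.2
      ∧ Wvec c z p.2 = (Real.sqrt (c.T p) : ℂ) * z p.1
        + Complex.I * (Real.sqrt (c.R p) : ℂ) * z p.2 := by
  obtain ⟨hD1, hD2, hS1, hS2⟩ :
      p.1 ∉ c.De ∧ p.2 ∉ c.De ∧ p.1 ∉ c.Sh ∧ p.2 ∉ c.Sh := by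
    obtain ⟨a1, a2, a3, a4, a5, a6⟩ := c.hBdisj p hp
    exact ⟨a3, a4, a5, a6⟩
  obtain ⟨Rest, hsplit, hr1, hr2⟩ := Bprod_split c hp
  have hst := c.hst p hp
  constructor
  · rw [Wvec_eq, hsplit, ← Matrix.mulVec_mulVec, Bmat_mulVec_fst hst,
      hr1.mulVec z, hr2.mulVec z]
    simp [hD1, hS1]
  · rw [Wvec_eq, hsplit, ← Matrix.mulVec_mulVec, Bmat_mulVec_snd hst,
      hr1.mulVec z, hr2.mulVec z]
    simp [hD2, hS2]

/-! ### Pointwise dynamics on `Λ_z^i` -/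

lemma main_point (c : Config N) (s t i : Fin N) (hmem : (s, t) ∈ c.Bs)
    (hi : i = s ∨ i = t) (z : Fin N → ℂ) {l : Lam N} (hl : l ∈ lamSet z i) :
    ∃ α : ℂ, α ≠ 0 ∧
      newAmp c l.1 l.2.1 l.2.2 s = α * Wvec c z s ∧
      newAmp c l.1 l.2.1 l.2.2 t = α * Wvec c z t ∧
      (s, newAmp c l.1 l.2.1 l.2.2, newTau c l.1 l.2.2) ∈ lamSet (Wvec c z) s ∧
      (t, newAmp c l.1 l.2.1 l.2.2, newTau c l.1 l.2.2) ∈ lamSet (Wvec c z) t := by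
  haveI : Nonempty (Fin N) := ⟨i⟩
  obtain ⟨q, u, τ⟩ := l
  obtain ⟨hq, hτi, hMpos, α, hα, hprop⟩ := hl
  simp only at hq hτi hMpos
  subst hq
  set M := tmax τ with hMdef
  set τ' := newTau c q τ with hτ'def
  set u' := newAmp c q u τ with hu'def
  have hle : ∀ j, τ j ≤ M := le_tmax τ
  have hprop' : ∀ m, (if τ m = M then u m else 0) = α * z m := by
    intro m
    have := congrFun hprop m
    simpa [deltaVec] using this
  have hz0 : ∀ m, τ m ≠ M → z m = 0 := by
    intro m hm
    have := hprop' m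
    rw [if_neg hm] at this
    exact (mul_eq_zero.mp this.symm).resolve_left hα
  have hz1 : ∀ m, τ m = M → u m = α * z m := by
    intro m hm
    have := hprop' m
    rwa [if_pos hm] at this
  obtain ⟨hsF, htF, hsDe, htDe, hsSh, htSh⟩ := c.hBdisj (s, t) hmem
  have hiDe : q ∉ c.De := by rcases hi with rfl | rfl <;> assumption
  have hiSh : q ∉ c.Sh := by rcases hi with rfl | rfl <;> assumption
  have hmaxst : max (τ s) (τ t) = M := by
    refine le_antisymm (max_le (hle s) (hle t)) ?_
    rcases hi with rfl | rfl
    · exact hτi.symm.le.trans (le_max_left _ _)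
    · exact hτi.symm.le.trans (le_max_right _ _)
  have hBs : inB c s := ⟨(s, t), hmem, Or.inl rfl⟩
  have hBt : inB c t := ⟨(s, t), hmem, Or.inr rfl⟩
  have htauS : τ' s = M / 2 := by
    rw [hτ'def, newTau]
    rw [if_neg hsDe, dif_pos hBs, choose_eq c hBs hmem (Or.inl rfl)]
    rw [hmaxst]
  have htauT : τ' t = M / 2 := by
    rw [hτ'def, newTau]
    rw [if_neg htDe, dif_pos hBt, choose_eq c hBt hmem (Or.inr rfl)]
    rw [hmaxst]
  have htle : ∀ m, τ' m ≤ M / 2 := by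
    intro m
    rw [hτ'def, newTau]
    split_ifs with h1 h2 h3
    · exact absurd h1 (h2 ▸ hiDe)
    · linarith
    · have := max_le (hle h3.choose.1) (hle h3.choose.2)
      linarith
    · linarith [hle m]
  have htmax' : tmax τ' = M / 2 := tmax_eq_of htle htauS
  have hM2 : 0 < M / 2 := by linarith
  -- the key claim
  have hΔ : deltaVec τ' u' = α • Wvec c z := by
    funext m
    show (if τ' m = tmax τ' then u' m else 0) = α * Wvec c z m
    rw [htmax']
    by_cases hDe : m ∈ c.De
    · have hτ'm : τ' m = 0 := by
        rw [hτ'def, newTau, if_pos hDe, if_neg (fun h : q = m => hiDe (h ▸ hDe))]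
      rw [if_neg (by rw [hτ'm]; exact hM2.ne), Wvec_de c z hDe, mul_zero]
    · by_cases hB : inB c m
      · obtain ⟨_, _, hSh⟩ := inB_not_mem c hB
        set p' := hB.choose with hp'def
        have hp' : p' ∈ c.Bs := hB.choose_spec.1
        have hmp' : m = p'.1 ∨ m = p'.2 := hB.choose_spec.2
        have hp'st : p'.1 ≠ p'.2 := c.hst p' hp'
        set M' := max (τ p'.1) (τ p'.2) with hM'def
        have hτ'm : τ' m = M' / 2 := by
          rw [hτ'def, newTau, if_neg hDe, dif_pos hB]
        have hM'le : M' ≤ M := max_le (hle _) (hle _)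
        have hwm := Wvec_pair c z hp'
        have hu'm1 : m = p'.1 → u' m =
            Complex.I * (Real.sqrt (c.R p') : ℂ) * (if τ p'.1 = M' then u p'.1 else 0)
              + (Real.sqrt (c.T p') : ℂ) * (if τ p'.2 = M' then u p'.2 else 0) := by
          intro hm1
          rw [hu'def, newAmp, if_neg hDe, if_neg hSh, dif_pos hB]
          simp only [← hp'def, ← hM'def, if_pos hm1]
        have hu'm2 : m = p'.2 → u' m =
            (Real.sqrt (c.T p') : ℂ) * (if τ p'.1 = M' then u p'.1 else 0)
              + Complex.I * (Real.sqrt (c.R p') : ℂ) * (if τ p'.2 = M' then u p'.2 else 0) := by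
          intro hm2
          have hne1 : ¬ m = p'.1 := fun h => hp'st (h.symm.trans hm2)
          rw [hu'def, newAmp, if_neg hDe, if_neg hSh, dif_pos hB]
          simp only [← hp'def, ← hM'def, if_neg hne1]
        by_cases hMM : M' = M
        · have hus : (if τ p'.1 = M' then u p'.1 else 0) = α * z p'.1 := by
            rw [hMM]
            split_ifs with h
            · exact hz1 _ h
            · rw [hz0 _ h, mul_zero]
          have hut : (if τ p'.2 = M' then u p'.2 else 0) = α * z p'.2 := by
            rw [hMM]
            split_ifs with h
            · exact hz1 _ h
            · rw [hz0 _ h, mul_zero]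
          rw [if_pos (by rw [hτ'm, hMM])]
          rcases hmp' with hm1 | hm2
          · rw [hu'm1 hm1, hus, hut, hm1, hwm.1]; ring
          · rw [hu'm2 hm2, hus, hut, hm2, hwm.2]; ring
        · have hne : τ' m ≠ M / 2 := by
            rw [hτ'm]
            exact fun h => hMM (by linarith)
          rw [if_neg hne]
          have hz1' : z p'.1 = 0 := by
            apply hz0
            intro h
            exact hMM (le_antisymm hM'le (h ▸ le_max_left _ _))
          have hz2' : z p'.2 = 0 := by
            apply hz0
            intro h
            exact hMM (le_antisymm hM'le (h ▸ le_max_right _ _))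
          rcases hmp' with hm1 | hm2
          · rw [hm1, hwm.1, hz1', hz2']; ring
          · rw [hm2, hwm.2, hz1', hz2']; ring
      · have hτ'm : τ' m = τ m / 2 := by
          rw [hτ'def, newTau, if_neg hDe, dif_neg hB]
        have hu'm : u' m
            = (if m ∈ c.Sh then Complex.exp (Complex.I * (c.ω m : ℂ)) else 1) * u m := by
          rw [hu'def, newAmp, if_neg hDe]
          by_cases hSh : m ∈ c.Sh
          · rw [if_pos hSh, if_pos hSh]
          · rw [if_neg hSh, if_neg hSh, dif_neg hB, one_mul]
        rw [Wvec_free c z hDe hB]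
        by_cases hτm : τ m = M
        · rw [if_pos (by rw [hτ'm, hτm]), hu'm, hz1 _ hτm]; ring
        · rw [if_neg (by rw [hτ'm]; exact fun h => hτm (by linarith)), hz0 _ hτm]
          ring
  have hαs : u' s = α * Wvec c z s := by
    have h1 : deltaVec τ' u' s = u' s := by
      show (if τ' s = tmax τ' then u' s else 0) = u' s
      rw [if_pos (by rw [htauS, htmax'])]
    have h2 := congrFun hΔ s
    rw [h1] at h2
    simpa using h2
  have hαt : u' t = α * Wvec c z t := by
    have h1 : deltaVec τ' u' t = u' t := by
      show (if τ' t = tmax τ' then u' t else 0) = u' t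
      rw [if_pos (by rw [htauT, htmax'])]
    have h2 := congrFun hΔ t
    rw [h1] at h2
    simpa using h2
  exact ⟨α, hα, hαs, hαt,
    ⟨rfl, htauS.trans htmax'.symm, htmax' ▸ hM2, α, hα, hΔ⟩,
    ⟨rfl, htauT.trans htmax'.symm, htmax' ▸ hM2, α, hα, hΔ⟩⟩

/-! ### Measurability -/

lemma meas_tau (k : Fin N) : Measurable fun l : Lam N => l.2.2 k :=
  (measurable_pi_apply k).comp (measurable_snd.comp measurable_snd)

lemma meas_amp (k : Fin N) : Measurable fun l : Lam N => l.2.1 k :=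
  (measurable_pi_apply k).comp (measurable_fst.comp measurable_snd)

lemma measurable_newTau (c : Config N) :
    Measurable fun l : Lam N => newTau c l.1 l.2.2 := by
  apply measurable_pi_lambda
  intro m
  by_cases hDe : m ∈ c.De
  · simp only [newTau, if_pos hDe]
    exact Measurable.ite ((measurableSet_singleton m).preimage measurable_fst)
      measurable_const measurable_const
  · by_cases hB : inB c m
    · simp only [newTau, if_neg hDe, dif_pos hB]
      exact ((meas_tau _).max (meas_tau _)).div_const 2
    · simp only [newTau, if_neg hDe, dif_neg hB]
      exact (meas_tau m).div_const 2

lemma measurable_newAmp (c : Config N) :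
    Measurable fun l : Lam N => newAmp c l.1 l.2.1 l.2.2 := by
  apply measurable_pi_lambda
  intro m
  by_cases hDe : m ∈ c.De
  · simp only [newAmp, if_pos hDe]
    exact Measurable.ite ((measurableSet_singleton m).preimage measurable_fst)
      measurable_const (meas_amp m)
  · by_cases hSh : m ∈ c.Sh
    · simp only [newAmp, if_neg hDe, if_pos hSh]
      exact (meas_amp m).const_mul _
    · by_cases hB : inB c m
      · simp only [newAmp, if_neg hDe, if_neg hSh, dif_pos hB]
        have hset1 : MeasurableSet {l : Lam N |
            l.2.2 hB.choose.1 = max (l.2.2 hB.choose.1) (l.2.2 hB.choose.2)} :=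
          measurableSet_eq_fun (meas_tau _) ((meas_tau _).max (meas_tau _))
        have hset2 : MeasurableSet {l : Lam N |
            l.2.2 hB.choose.2 = max (l.2.2 hB.choose.1) (l.2.2 hB.choose.2)} :=
          measurableSet_eq_fun (meas_tau _) ((meas_tau _).max (meas_tau _))
        have hus : Measurable fun l : Lam N =>
            (if l.2.2 hB.choose.1 = max (l.2.2 hB.choose.1) (l.2.2 hB.choose.2)
              then l.2.1 hB.choose.1 else 0) :=
          Measurable.ite hset1 (meas_amp _) measurable_const
        have hut : Measurable fun l : Lam N =>
            (if l.2.2 hB.choose.2 = max (l.2.2 hB.choose.1) (l.2.2 hB.choose.2)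
              then l.2.1 hB.choose.2 else 0) :=
          Measurable.ite hset2 (meas_amp _) measurable_const
        by_cases hm1 : m = hB.choose.1
        · simp only [if_pos hm1]
          exact (hus.const_mul _).add (hut.const_mul _)
        · simp only [if_neg hm1]
          exact (hus.const_mul _).add (hut.const_mul _)
      · simp only [newAmp, if_neg hDe, if_neg hSh, dif_neg hB]
        exact meas_amp m

lemma measurable_tmax_set (m : Fin N) [Nonempty (Fin N)] :
    MeasurableSet {l : Lam N | l.2.2 m = tmax l.2.2} := by
  have : {l : Lam N | l.2.2 m = tmax l.2.2} = ⋂ j, {l : Lam N | l.2.2 j ≤ l.2.2 m} := by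
    ext l
    simp only [Set.mem_setOf_eq, Set.mem_iInter]
    exact tmax_eq_iff l.2.2 m
  rw [this]
  exact MeasurableSet.iInter fun j => measurableSet_le (meas_tau j) (meas_tau m)

lemma measurable_deltaVec [Nonempty (Fin N)] :
    Measurable fun l : Lam N => deltaVec l.2.2 l.2.1 := by
  apply measurable_pi_lambda
  intro m
  exact Measurable.ite (measurable_tmax_set m) (meas_amp m) measurable_const

lemma measurable_lamSet (z : Fin N → ℂ) (i : Fin N) : MeasurableSet (lamSet z i) := by
  haveI : Nonempty (Fin N) := ⟨i⟩
  have hdecomp : lamSet z i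
      = ({l : Lam N | l.1 = i} ∩ {l : Lam N | l.2.2 i = tmax l.2.2})
        ∩ ({l : Lam N | 0 < l.2.2 i} ∩ {l : Lam N | Propto (deltaVec l.2.2 l.2.1) z}) := by
    ext l
    constructor
    · rintro ⟨h1, h2, h3, h4⟩
      exact ⟨⟨h1, h2⟩, ⟨by simpa [h2] using h3, h4⟩⟩
    · rintro ⟨⟨h1, h2⟩, ⟨h3, h4⟩⟩
      refine ⟨h1, h2, ?_, h4⟩
      rw [← h2]
      exact h3
  rw [hdecomp]
  refine MeasurableSet.inter
    (MeasurableSet.inter ((measurableSet_singleton i).preimage measurable_fst)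
      (measurable_tmax_set i))
    (MeasurableSet.inter (measurableSet_lt measurable_const (meas_tau i)) ?_)
  by_cases hz : z = 0
  · subst hz
    have : {l : Lam N | Propto (deltaVec l.2.2 l.2.1) 0}
        = ⋂ j, {l : Lam N | deltaVec l.2.2 l.2.1 j = 0} := by
      ext l
      simp only [Set.mem_setOf_eq, propto_zero, Set.mem_iInter, funext_iff]
      rfl
    rw [this]
    exact MeasurableSet.iInter fun j =>
      measurableSet_eq_fun ((measurable_pi_apply j).comp measurable_deltaVec)
        measurable_const
  · obtain ⟨j0, hj0⟩ : ∃ j0, z j0 ≠ 0 := by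
      by_contra h
      push_neg at h
      exact hz (funext h)
    have hdj0 : Measurable fun l : Lam N => deltaVec l.2.2 l.2.1 j0 :=
      (measurable_pi_apply j0).comp measurable_deltaVec
    have : {l : Lam N | Propto (deltaVec l.2.2 l.2.1) z}
        = {l : Lam N | deltaVec l.2.2 l.2.1 j0 = 0}ᶜ
          ∩ ⋂ m, {l : Lam N | deltaVec l.2.2 l.2.1 m
              = deltaVec l.2.2 l.2.1 j0 / z j0 * z m} := by
      ext l
      simp only [Set.mem_setOf_eq, propto_iff hj0, Set.mem_inter_iff, Set.mem_compl_iff,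
        Set.mem_iInter]
      constructor
      · rintro ⟨h1, h2⟩
        exact ⟨h1, fun m => by rw [congrFun h2 m]; simp⟩
      · rintro ⟨h1, h2⟩
        refine ⟨h1, funext fun m => ?_⟩
        rw [h2 m]; simp
    rw [this]
    refine MeasurableSet.inter
      (measurableSet_eq_fun hdj0 measurable_const).compl
      (MeasurableSet.iInter fun m => measurableSet_eq_fun
        ((measurable_pi_apply m).comp measurable_deltaVec)
        ((hdj0.div_const _).mul_const _))

/-! ### The step kernel on `Λ_z^i` -/

lemma step_eq (c : Config N) (s t i : Fin N) (hmem : (s, t) ∈ c.Bs)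
    (hi : i = s ∨ i = t) (z : Fin N → ℂ)
    (hw : ‖Wvec c z s‖ ^ 2 + ‖Wvec c z t‖ ^ 2 ≠ 0)
    {l : Lam N} (hl : l ∈ lamSet z i) :
    step c l
      = ENNReal.ofReal (‖Wvec c z s‖ ^ 2 /
            (‖Wvec c z s‖ ^ 2 + ‖Wvec c z t‖ ^ 2)) •
          Measure.dirac (s, newAmp c l.1 l.2.1 l.2.2, newTau c l.1 l.2.2)
        + ENNReal.ofReal (‖Wvec c z t‖ ^ 2 /
            (‖Wvec c z s‖ ^ 2 + ‖Wvec c z t‖ ^ 2)) •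
          Measure.dirac (t, newAmp c l.1 l.2.1 l.2.2, newTau c l.1 l.2.2) := by
  obtain ⟨α, hα, hαs, hαt, _, _⟩ := main_point c s t i hmem hi z hl
  have hq1 : l.1 = i := hl.1
  have hBi : inB c l.1 := hq1 ▸ ⟨(s, t), hmem, hi⟩
  have hchoose : hBi.choose = (s, t) := choose_eq c hBi hmem (hq1 ▸ hi)
  have hk : ‖α‖ ^ 2 ≠ 0 :=
    pow_ne_zero _ (norm_ne_zero_iff.mpr hα)
  have hmuls : ‖α * Wvec c z s‖ ^ 2
      = ‖α‖ ^ 2 * ‖Wvec c z s‖ ^ 2 := by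
    rw [norm_mul, mul_pow]
  have hmult : ‖α * Wvec c z t‖ ^ 2
      = ‖α‖ ^ 2 * ‖Wvec c z t‖ ^ 2 := by
    rw [norm_mul, mul_pow]
  have hsum : ‖α * Wvec c z s‖ ^ 2 + ‖α * Wvec c z t‖ ^ 2
      = ‖α‖ ^ 2 *
          (‖Wvec c z s‖ ^ 2 + ‖Wvec c z t‖ ^ 2) := by
    rw [hmuls, hmult, mul_add]
  simp only [step]
  rw [dif_pos hBi, hchoose]
  simp only [Prod.fst, Prod.snd]
  rw [hαs, hαt, hsum, if_neg (mul_ne_zero hk hw), hmuls, hmult,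
    mul_div_mul_left _ _ hk, mul_div_mul_left _ _ hk]

end Aux

/-- Lemma 1, second part, beam splitter case. If `i ∈ {s,t} ∈ B`,
`w = Wz` and `|w_s|² + |w_t|² ≠ 0`, then for `p ∈ [z]_i` the output measure is the stated
mixture of some `p_s ∈ [w]_s` and `p_t ∈ [w]_t`. -/
theorem lemma1_beam_splitter {N : ℕ} (c : Config N) (s t i : Fin N)
    (hmem : (s, t) ∈ c.Bs) (hi : i = s ∨ i = t) (z : Fin N → ℂ)
    (hw : ‖Wvec c z s‖ ^ 2 + ‖Wvec c z t‖ ^ 2 ≠ 0)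
    (p : Measure (Lam N)) (hp : memClassI z i p) :
    ∃ ps pt : Measure (Lam N), memClassI (Wvec c z) s ps ∧ memClassI (Wvec c z) t pt ∧
      out c p =
        ENNReal.ofReal (‖Wvec c z s‖ ^ 2 /
            (‖Wvec c z s‖ ^ 2 + ‖Wvec c z t‖ ^ 2)) • ps +
        ENNReal.ofReal (‖Wvec c z t‖ ^ 2 /
            (‖Wvec c z s‖ ^ 2 + ‖Wvec c z t‖ ^ 2)) • pt := by
  classical
  haveI : Nonempty (Fin N) := ⟨i⟩
  obtain ⟨hprob, hpfull⟩ := hp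
  haveI := hprob
  set A := ENNReal.ofReal (‖Wvec c z s‖ ^ 2 /
      (‖Wvec c z s‖ ^ 2 + ‖Wvec c z t‖ ^ 2)) with hA
  set B := ENNReal.ofReal (‖Wvec c z t‖ ^ 2 /
      (‖Wvec c z s‖ ^ 2 + ‖Wvec c z t‖ ^ 2)) with hB
  set Ts : Lam N → Lam N :=
    fun l => (s, newAmp c l.1 l.2.1 l.2.2, newTau c l.1 l.2.2) with hTsdef
  set Tt : Lam N → Lam N :=
    fun l => (t, newAmp c l.1 l.2.1 l.2.2, newTau c l.1 l.2.2) with hTtdef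
  have hTs : Measurable Ts :=
    measurable_const.prodMk ((measurable_newAmp c).prodMk (measurable_newTau c))
  have hTt : Measurable Tt :=
    measurable_const.prodMk ((measurable_newAmp c).prodMk (measurable_newTau c))
  set g : Lam N → Measure (Lam N) :=
    fun l => A • Measure.dirac (Ts l) + B • Measure.dirac (Tt l) with hgdef
  have hg : Measurable g := by
    apply Measure.measurable_of_measurable_coe
    intro S hS
    simp only [hgdef, Measure.coe_add, Pi.add_apply, Measure.smul_apply, smul_eq_mul]
    exact (((Measure.measurable_coe hS).comp (Measure.measurable_dirac.comp hTs)).const_mul A).add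
      (((Measure.measurable_coe hS).comp (Measure.measurable_dirac.comp hTt)).const_mul B)
  have hnull : p (lamSet z i)ᶜ = 0 := by
    have h := measure_compl (measurable_lamSet z i) (measure_ne_top p _)
    rw [hpfull, measure_univ] at h
    simpa using h
  have hae : step c =ᵐ[p] g := by
    refine Filter.eventuallyEq_of_mem (MeasureTheory.mem_ae_iff.mpr hnull) fun l hl => ?_
    simp only [hgdef, hTsdef, hTtdef, hA, hB]
    exact step_eq c s t i hmem hi z hw hl
  have hbind : out c p = p.bind g := by
    rw [out]
    unfold Measure.bind
    rw [Measure.map_congr hae]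
  have hmapfull : ∀ (T : Lam N → Lam N), Measurable T →
      (lamSet z i ⊆ T ⁻¹' (lamSet (Wvec c z) s)) →
      p.map T (lamSet (Wvec c z) s) = 1 := by
    intro T hT hsub
    refine le_antisymm prob_le_one ?_
    calc (1 : ENNReal) = p (lamSet z i) := hpfull.symm
      _ ≤ p (T ⁻¹' (toMeasurable (p.map T) (lamSet (Wvec c z) s))) :=
        measure_mono (hsub.trans (Set.preimage_mono (subset_toMeasurable _ _)))
      _ = p.map T (toMeasurable (p.map T) (lamSet (Wvec c z) s)) :=
        (Measure.map_apply hT (measurableSet_toMeasurable _ _)).symm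
      _ = p.map T (lamSet (Wvec c z) s) := measure_toMeasurable _
  have hmapfull' : ∀ (T : Lam N → Lam N), Measurable T →
      (lamSet z i ⊆ T ⁻¹' (lamSet (Wvec c z) t)) →
      p.map T (lamSet (Wvec c z) t) = 1 := by
    intro T hT hsub
    refine le_antisymm prob_le_one ?_
    calc (1 : ENNReal) = p (lamSet z i) := hpfull.symm
      _ ≤ p (T ⁻¹' (toMeasurable (p.map T) (lamSet (Wvec c z) t))) :=
        measure_mono (hsub.trans (Set.preimage_mono (subset_toMeasurable _ _)))
      _ = p.map T (toMeasurable (p.map T) (lamSet (Wvec c z) t)) :=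
        (Measure.map_apply hT (measurableSet_toMeasurable _ _)).symm
      _ = p.map T (lamSet (Wvec c z) t) := measure_toMeasurable _
  refine ⟨p.map Ts, p.map Tt, ⟨Measure.isProbabilityMeasure_map hTs.aemeasurable, ?_⟩,
    ⟨Measure.isProbabilityMeasure_map hTt.aemeasurable, ?_⟩, ?_⟩
  · exact hmapfull Ts hTs fun l hl =>
      (main_point c s t i hmem hi z hl).choose_spec.2.2.2.1
  · exact hmapfull' Tt hTt fun l hl =>
      (main_point c s t i hmem hi z hl).choose_spec.2.2.2.2
  · rw [hbind]
    apply Measure.ext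
    intro S hS
    rw [Measure.bind_apply hS hg.aemeasurable]
    have hgS : ∀ l, g l S = A * Measure.dirac (Ts l) S + B * Measure.dirac (Tt l) S := by
      intro l
      simp [hgdef, Measure.smul_apply, smul_eq_mul]
    simp only [hgS]
    have hmeas1 : Measurable fun l => Measure.dirac (Ts l) S :=
      (Measure.measurable_coe hS).comp (Measure.measurable_dirac.comp hTs)
    have hmeas2 : Measurable fun l => Measure.dirac (Tt l) S :=
      (Measure.measurable_coe hS).comp (Measure.measurable_dirac.comp hTt)
    rw [lintegral_add_left (hmeas1.const_mul A), lintegral_const_mul A hmeas1,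
      lintegral_const_mul B hmeas2]
    have hdirac : ∀ (T : Lam N → Lam N), Measurable T →
        ∫⁻ l, Measure.dirac (T l) S ∂p = p.map T S := by
      intro T hT
      have h1 : ∀ l, Measure.dirac (T l) S
          = (T ⁻¹' S).indicator (fun _ => (1 : ENNReal)) l := by
        intro l
        rw [Measure.dirac_apply' _ hS]
        by_cases h : T l ∈ S <;> simp [Set.indicator, h]
      calc ∫⁻ l, Measure.dirac (T l) S ∂p
          = ∫⁻ l, (T ⁻¹' S).indicator (1 : Lam N → ENNReal) l ∂p := lintegral_congr h1
        _ = p (T ⁻¹' S) := lintegral_indicator_one (hT hS)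
        _ = p.map T S := (Measure.map_apply hT hS).symm
    rw [hdirac Ts hTs, hdirac Tt hTt]
    simp [Measure.add_apply, Measure.smul_apply, smul_eq_mul]

end SPI
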